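/- arXiv:1804.10203 — 2 statements merged into one kernel-verified Lean document; each statement's English description precedes it below -/
import Mathlib

section
/- Let p(z) = z^s (a₀ + ∑_{v=μ}^{n−s} a_v z^v), 1 ≤ μ ≤ n−s, 0 ≤ s ≤ n−1, be a polynomial of degree n all of whose zeros other than the zero at the origin satisfy |z| ≥ k, where k ≥ 1. Then for α ∈ ℂ with |α| ≥ 1, max_{|z|=1} |D_α p(z)| ≤ [(|α|(n + s·k^μ) + (n−s)k^μ)/(1+k^μ)] · max_{|z|=1} |p(z)| − [(|α|−1)(n−s)/(k^s(1+k^μ))] · min_{|z|=k} |p(z)|. -/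
open Polynomial Metric

noncomputable def polyMaxOn (p : Polynomial ℂ) (r : ℝ) : ℝ :=
  sSup ((fun z => ‖p.eval z‖) '' sphere (0 : ℂ) r)

noncomputable def polyMinOn (p : Polynomial ℂ) (r : ℝ) : ℝ :=
  sInf ((fun z => ‖p.eval z‖) '' sphere (0 : ℂ) r)

noncomputable def Complex.abs : AbsoluteValue ℂ ℝ where
  toFun z := ‖z‖
  map_mul' := norm_mul
  nonneg' := norm_nonneg
  eq_zero' _ := norm_eq_zero
  add_le' := norm_add_le

lemma Complex.norm_eq_abs (z : ℂ) : ‖z‖ = Complex.abs z := rfl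

lemma Complex.abs_natCast (n : ℕ) : Complex.abs (n : ℂ) = n := Complex.norm_natCast n

lemma Complex.abs_ofReal (r : ℝ) : Complex.abs (r : ℂ) = |r| := Complex.norm_real r

lemma Complex.sq_abs (z : ℂ) : Complex.abs z ^ 2 = Complex.normSq z := Complex.sq_norm z

lemma Complex.continuous_abs : Continuous Complex.abs := continuous_norm

lemma multiset_cs (S : Multiset ℂ) :
    Complex.abs S.sum ^ 2 ≤ (Multiset.card S : ℝ) * ((S.map (fun b => Complex.abs b ^ 2)).sum) := by
  induction S using Multiset.induction with
  | empty => simp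
  | cons a S ih =>
    simp only [Multiset.sum_cons, Multiset.card_cons, Multiset.map_cons, Nat.cast_add,
      Nat.cast_one]
    rcases Multiset.empty_or_exists_mem S with rfl | ⟨b, hb⟩
    · simp
    have hm1 : (1:ℝ) ≤ (Multiset.card S : ℝ) := by
      have : 1 ≤ Multiset.card S := Multiset.card_pos.mpr (fun h => by simp [h] at hb)
      exact_mod_cast this
    set x := Complex.abs a with hx
    set y := Complex.abs S.sum with hy
    set m := (Multiset.card S : ℝ) with hmm
    set Q := ((S.map (fun b => Complex.abs b ^ 2)).sum) with hQdef
    have h1 : Complex.abs (a + S.sum) ≤ x + y := Complex.abs.add_le _ _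
    have h2 : (0:ℝ) ≤ x := Complex.abs.nonneg _
    have h3 : (0:ℝ) ≤ y := Complex.abs.nonneg _
    have hQ : (0:ℝ) ≤ Q := by
      apply Multiset.sum_nonneg; intro t ht
      obtain ⟨b, _, rfl⟩ := Multiset.mem_map.mp ht
      positivity
    have key : Complex.abs (a + S.sum) ^ 2 ≤ (x + y)^2 := by
      have := Complex.abs.nonneg (a + S.sum)
      nlinarith
    have amgm : 2*x*y ≤ m*x^2 + Q := by
      nlinarith [sq_nonneg (m*x - y), ih, mul_nonneg (mul_nonneg h2 h2) (sub_nonneg.mpr hm1)]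
    nlinarith [ih]

lemma eval_derivative_prod_roots (R : Multiset ℂ) (z : ℂ) (h : ∀ w ∈ R, z ≠ w) :
    (derivative (R.map (fun w => X - C w)).prod).eval z =
      ((R.map (fun w => X - C w)).prod.eval z) * (R.map (fun w => (z - w)⁻¹)).sum := by
  induction R using Multiset.induction with
  | empty => simp
  | cons a R ih =>
    have hza : z - a ≠ 0 := sub_ne_zero.mpr (h a (Multiset.mem_cons_self a R))
    have ih' := ih (fun w hw => h w (Multiset.mem_cons_of_mem hw))
    simp only [Multiset.map_cons, Multiset.prod_cons, Multiset.sum_cons, derivative_mul,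
      eval_add, eval_mul, eval_sub, eval_X, eval_C, derivative_sub, derivative_X, derivative_C,
      sub_zero, eval_one, one_mul, eval_multiset_prod] at *
    rw [ih']
    field_simp

lemma apollonius_sum (S : Multiset ℂ) (N : ℕ) (hN : Multiset.card S = N) (r : ℝ)
    (hr0 : 0 ≤ r) (hr : r ≤ 1) (hb : ∀ b ∈ S, Complex.abs (b - 1) ≤ r * Complex.abs b) :
    Complex.abs (S.sum - N) ≤ r * Complex.abs S.sum := by
  -- per-term: (1-r^2)|b|^2 - 2 Re b + 1 ≤ 0
  have per : ∀ b ∈ S, (1 - r^2) * Complex.abs b ^ 2 - 2 * b.re + 1 ≤ 0 := by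
    intro b hbS
    have h1 := hb b hbS
    have h2 : Complex.abs (b-1) ^ 2 ≤ (r * Complex.abs b)^2 := by
      have := Complex.abs.nonneg (b-1)
      nlinarith
    have e1 : Complex.abs (b-1) ^ 2 = Complex.abs b ^ 2 - 2*b.re + 1 := by
      rw [Complex.sq_abs, Complex.sq_abs, Complex.normSq_sub]
      simp [Complex.normSq_one, Complex.mul_re]
      ring
    nlinarith [e1, h2]
  -- sum up
  have sum1 : (1 - r^2) * ((S.map (fun b => Complex.abs b ^ 2)).sum) - 2 * (S.sum).re
      + (N:ℝ) ≤ 0 := by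
    have : ((S.map (fun b => (1 - r^2) * Complex.abs b ^ 2 - 2*b.re + 1)).sum) ≤
        ((S.map (fun _ => (0:ℝ))).sum) :=
      Multiset.sum_map_le_sum_map _ _ (fun b hbS => per b hbS)
    simp only [Multiset.map_const', Multiset.sum_replicate, smul_zero] at this
    have e2 : ((S.map (fun b => (1 - r^2) * Complex.abs b ^ 2 - 2*b.re + 1)).sum) =
        (1 - r^2) * ((S.map (fun b => Complex.abs b ^ 2)).sum) - 2 * (S.sum).re + (N:ℝ) := by
      rw [show (fun b : ℂ => (1 - r^2) * Complex.abs b ^ 2 - 2*b.re + 1) =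
        (fun b : ℂ => ((1 - r^2) * Complex.abs b ^ 2 - 2*b.re) + 1) from rfl]
      rw [Multiset.sum_map_add]
      simp only [Multiset.map_const', Multiset.sum_replicate, hN, nsmul_eq_mul, mul_one]
      rw [show (fun b : ℂ => (1 - r^2) * Complex.abs b ^ 2 - 2*b.re) =
        (fun b : ℂ => ((1 - r^2) * Complex.abs b ^ 2) - (2*b.re)) from rfl]
      rw [Multiset.sum_map_sub]
      congr 1
      congr 1
      · rw [← Multiset.sum_map_mul_left]
      · -- sum of 2*b.re = 2 * (S.sum).re
        have : (S.map (fun b : ℂ => 2 * b.re)).sum = 2 * ((S.map Complex.re).sum) := by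
          rw [← Multiset.sum_map_mul_left]
        rw [this]
        congr 1
        -- re of sum
        exact (map_multiset_sum Complex.reAddGroupHom S).symm
    linarith [e2 ▸ this]
  have cs := multiset_cs S
  rw [hN] at cs
  set Q := ((S.map (fun b => Complex.abs b ^ 2)).sum) with hQdef
  set T := S.sum with hT
  have hQ0 : (0:ℝ) ≤ Q := by
    apply Multiset.sum_nonneg; intro t ht
    obtain ⟨b, _, rfl⟩ := Multiset.mem_map.mp ht
    positivity
  have eT : Complex.abs (T - N) ^ 2 = Complex.abs T ^ 2 - 2*(N:ℝ)*T.re + (N:ℝ)^2 := by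
    rw [Complex.sq_abs, Complex.sq_abs, Complex.normSq_sub]
    simp [Complex.normSq_natCast, Complex.mul_re]
    ring
  have key2 : Complex.abs (T - N) ^ 2 ≤ (r * Complex.abs T)^2 := by
    rw [eT, mul_pow]
    have hr2 : (0:ℝ) ≤ 1 - r^2 := by nlinarith
    have hNs := mul_le_mul_of_nonneg_left sum1 (Nat.cast_nonneg N : (0:ℝ) ≤ N)
    have hcs2 := mul_le_mul_of_nonneg_left cs hr2
    nlinarith [hNs, hcs2]
  have h1 : (0:ℝ) ≤ Complex.abs (T - N) := Complex.abs.nonneg _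
  have h2 : (0:ℝ) ≤ r * Complex.abs T := mul_nonneg hr0 (Complex.abs.nonneg _)
  nlinarith [key2, h1, h2]

lemma abs_multiset_sum_le (S : Multiset ℂ) :
    Complex.abs S.sum ≤ (S.map (fun x => Complex.abs x)).sum := by
  induction S using Multiset.induction with
  | empty => simp
  | cons a S ih =>
    simp only [Multiset.sum_cons, Multiset.map_cons]
    calc Complex.abs (a + S.sum) ≤ Complex.abs a + Complex.abs S.sum := Complex.abs.add_le _ _
      _ ≤ Complex.abs a + (S.map (fun x => Complex.abs x)).sum := by linarith

lemma lemD (φ : Polynomial ℂ) (N : ℕ) (hN : φ.natDegree ≤ N) (hφ0 : φ ≠ 0) (k : ℝ)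
    (hk : 0 < k) (hroots : ∀ w ∈ φ.roots, k ≤ Complex.abs w) (z : ℂ) (hz : Complex.abs z ≤ k)
    (hez : φ.eval z ≠ 0) :
    k * Complex.abs ((derivative φ).eval z) ≤
      Complex.abs ((N : ℂ) * φ.eval z - z * (derivative φ).eval z) := by
  classical
  set R := φ.roots with hR
  have hsplit : φ.Splits := IsAlgClosed.splits φ
  have hcard : Multiset.card R = φ.natDegree := (splits_iff_card_roots).mp hsplit
  have hfact : φ = C φ.leadingCoeff * (R.map (fun w => X - C w)).prod :=
    hsplit.eq_prod_roots
  have hznr : ∀ w ∈ R, z ≠ w := by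
    intro w hw heq
    exact hez (heq ▸ (isRoot_of_mem_roots hw))
  set SS := (R.map (fun w => (z - w)⁻¹)).sum with hSS
  have evalφ' : (derivative φ).eval z = φ.eval z * SS := by
    conv_lhs => rw [hfact]
    rw [derivative_mul, derivative_C, zero_mul, zero_add, eval_mul, eval_C,
      eval_derivative_prod_roots R z hznr]
    conv_rhs => rw [hfact]
    rw [eval_mul, eval_C]
    ring
  have hmN : Multiset.card R ≤ N := hcard ▸ hN
  rcases eq_or_ne z 0 with rfl | hz0
  · -- z = 0 case
    rw [evalφ']
    simp only [zero_mul, sub_zero, map_mul]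
    have hSSb : Complex.abs SS ≤ (Multiset.card R : ℝ) * (1/k) := by
      have h1 : Complex.abs SS ≤ ((R.map (fun w => ((0:ℂ) - w)⁻¹)).map (fun x => Complex.abs x)).sum :=
        abs_multiset_sum_le _
      rw [Multiset.map_map] at h1
      have h2 : ((R.map ((fun x => Complex.abs x) ∘ fun w => ((0:ℂ) - w)⁻¹)).sum) ≤
          ((R.map (fun _ => 1/k)).sum) := by
        apply Multiset.sum_map_le_sum_map
        intro w hw
        simp only [Function.comp_apply, zero_sub, map_inv₀, map_neg_eq_map]
        rw [inv_le_comm₀ (lt_of_lt_of_le hk (hroots w hw)) (by positivity), inv_div, div_one]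
        exact hroots w hw
      have h3 : ((R.map (fun _ => 1/k)).sum) = (Multiset.card R : ℝ) * (1/k) := by
        simp [Multiset.map_const', Multiset.sum_replicate, nsmul_eq_mul]
      linarith
    rw [Complex.abs_natCast]
    have hcN : (Multiset.card R : ℝ) ≤ (N:ℝ) := by exact_mod_cast hmN
    have h4 : k * (Complex.abs (eval 0 φ) * Complex.abs SS) ≤
        Complex.abs (eval 0 φ) * ((Multiset.card R : ℝ)) := by
      have := mul_le_mul_of_nonneg_left hSSb (Complex.abs.nonneg (eval 0 φ))
      calc k * (Complex.abs (eval 0 φ) * Complex.abs SS)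
          ≤ k * (Complex.abs (eval 0 φ) * ((Multiset.card R : ℝ) * (1/k))) := by
            exact mul_le_mul_of_nonneg_left this hk.le
        _ = Complex.abs (eval 0 φ) * ((Multiset.card R : ℝ)) := by field_simp
    calc k * (Complex.abs (eval 0 φ) * Complex.abs SS)
        ≤ Complex.abs (eval 0 φ) * ((Multiset.card R : ℝ)) := h4
      _ ≤ (N:ℝ) * Complex.abs (eval 0 φ) := by
          nlinarith [Complex.abs.nonneg (eval 0 φ)]
  · -- z ≠ 0 case
    set r : ℝ := Complex.abs z / k with hr
    have hr0 : 0 ≤ r := div_nonneg (Complex.abs.nonneg z) hk.le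
    have hr1 : r ≤ 1 := (div_le_one hk).mpr hz
    set T : Multiset ℂ := R.map (fun w => w / (w - z)) + Multiset.replicate (N - Multiset.card R) 1 with hT
    have hTcard : Multiset.card T = N := by
      simp [hT, Multiset.card_replicate, Nat.add_sub_cancel' hmN]
    have hper : ∀ b ∈ T, Complex.abs (b - 1) ≤ r * Complex.abs b := by
      intro b hb
      rw [hT, Multiset.mem_add] at hb
      rcases hb with hb | hb
      · obtain ⟨w, hw, rfl⟩ := Multiset.mem_map.mp hb
        have hwz : w - z ≠ 0 := fun h => (hznr w hw) (by linear_combination -h)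
        have hb1 : w / (w - z) - 1 = z / (w - z) := by field_simp; ring
        have key : Complex.abs z ≤ r * Complex.abs w := by
          rw [hr, div_mul_eq_mul_div, le_div_iff₀ hk]
          exact mul_le_mul_of_nonneg_left (hroots w hw) (Complex.abs.nonneg z)
        rw [hb1, map_div₀, map_div₀, mul_div_assoc']
        gcongr
      · have : b = 1 := Multiset.eq_of_mem_replicate hb
        simp [this, hr0]
    have hap := apollonius_sum T N hTcard r hr0 hr1 hper
    have hTsum : T.sum = (N : ℂ) - z * SS := by
      rw [hT, Multiset.sum_add, Multiset.sum_replicate]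
      have : (R.map (fun w => w / (w - z))).sum = (Multiset.card R : ℂ) - z * SS := by
        have hfun : ∀ w ∈ R, w / (w - z) = 1 - z * (z - w)⁻¹ := by
          intro w hw
          have hwz : z - w ≠ 0 := sub_ne_zero.mpr (hznr w hw)
          have hwz' : w - z ≠ 0 := fun h => hwz (by linear_combination -h)
          field_simp
          ring
        rw [Multiset.map_congr rfl hfun, Multiset.sum_map_sub]
        simp only [Multiset.map_const', Multiset.sum_replicate, nsmul_eq_mul, mul_one]
        congr 1
        exact Multiset.sum_map_mul_left
      rw [this, nsmul_eq_mul, mul_one, Nat.cast_sub hmN]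
      ring
    rw [hTsum] at hap
    have hzsub : (N:ℂ) - z*SS - (N:ℂ) = -(z*SS) := by ring
    rw [hzsub, Complex.abs.map_neg, map_mul, hr] at hap
    have hza : 0 < Complex.abs z := Complex.abs.pos hz0
    have hφa : 0 < Complex.abs (φ.eval z) := Complex.abs.pos hez
    have step : k * Complex.abs SS ≤ Complex.abs ((N:ℂ) - z*SS) := by
      have h3 : Complex.abs z * (k * Complex.abs SS) ≤
          Complex.abs z * Complex.abs ((N:ℂ) - z*SS) := by
        calc Complex.abs z * (k * Complex.abs SS) = k * (Complex.abs z * Complex.abs SS) := by ring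
          _ ≤ k * (Complex.abs z / k * Complex.abs ((N:ℂ) - z*SS)) :=
              mul_le_mul_of_nonneg_left hap hk.le
          _ = Complex.abs z * Complex.abs ((N:ℂ) - z*SS) := by field_simp
      exact le_of_mul_le_mul_left h3 hza
    rw [evalφ']
    have hfe : (N : ℂ) * φ.eval z - z * (φ.eval z * SS) = φ.eval z * ((N:ℂ) - z * SS) := by ring
    rw [hfe, map_mul, map_mul]
    calc k * (Complex.abs (φ.eval z) * Complex.abs SS)
        = Complex.abs (φ.eval z) * (k * Complex.abs SS) := by ring
      _ ≤ Complex.abs (φ.eval z) * Complex.abs ((N:ℂ) - z*SS) :=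
          mul_le_mul_of_nonneg_left step hφa.le

lemma poly_maxmod (p : Polynomial ℂ) (R : ℝ) (hR : 0 < R) (z : ℂ) (hz : Complex.abs z ≤ R) :
    Complex.abs (p.eval z) ≤ sSup ((fun w => Complex.abs (p.eval w)) '' sphere (0 : ℂ) R) := by
  have hbdd : BddAbove ((fun w => Complex.abs (p.eval w)) '' sphere (0 : ℂ) R) :=
    (isCompact_sphere (0:ℂ) R).bddAbove_image
      ((Complex.continuous_abs.comp (p.continuous_aeval)).continuousOn)
  have hfr : ∀ w ∈ frontier (ball (0:ℂ) R), ‖p.eval w‖ ≤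
      sSup ((fun w => Complex.abs (p.eval w)) '' sphere (0 : ℂ) R) := by
    intro w hw
    rw [frontier_ball _ hR.ne'] at hw
    exact le_csSup hbdd (Set.mem_image_of_mem _ hw)
  have hcl : z ∈ closure (ball (0:ℂ) R) := by
    rw [closure_ball _ hR.ne']
    simpa [Complex.norm_eq_abs] using hz
  simpa [Complex.norm_eq_abs] using
    Complex.norm_le_of_forall_mem_frontier_norm_le (isBounded_ball)
      ((p.differentiable).diffContOnCl) hfr hcl

lemma poly_minmod (φ : Polynomial ℂ) (k : ℝ) (hk : 0 < k)
    (hnz : ∀ w : ℂ, Complex.abs w < k → φ.eval w ≠ 0) (z : ℂ) (hz : Complex.abs z ≤ k) :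
    sInf ((fun w => Complex.abs (φ.eval w)) '' sphere (0 : ℂ) k) ≤ Complex.abs (φ.eval z) := by
  set m := sInf ((fun w => Complex.abs (φ.eval w)) '' sphere (0 : ℂ) k) with hm
  have hsph : ((k:ℂ)) ∈ sphere (0:ℂ) k := by
    simp [Complex.norm_eq_abs, Complex.abs_ofReal, abs_of_pos hk]
  by_cases hvanish : ∃ w ∈ sphere (0:ℂ) k, φ.eval w = 0
  · obtain ⟨w, hw, hw0⟩ := hvanish
    have hb : BddBelow ((fun w => Complex.abs (φ.eval w)) '' sphere (0 : ℂ) k) := by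
      refine ⟨0, fun x hx => ?_⟩
      obtain ⟨y, _, rfl⟩ := hx
      exact Complex.abs.nonneg _
    have : m ≤ 0 := by
      have h2 := csInf_le hb (Set.mem_image_of_mem (fun w => Complex.abs (φ.eval w)) hw)
      simpa [hw0] using h2
    exact this.trans (Complex.abs.nonneg _)
  · push_neg at hvanish
    -- φ nonzero on closed ball; attained min > 0
    obtain ⟨w0, hw0s, hw0min⟩ := (isCompact_sphere (0:ℂ) k).exists_isMinOn
      (NormedSpace.sphere_nonempty.mpr hk.le)
      ((Complex.continuous_abs.comp (φ.continuous)).continuousOn :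
        ContinuousOn (fun w => Complex.abs (φ.eval w)) (sphere (0:ℂ) k))
    have hm0 : 0 < Complex.abs (φ.eval w0) := Complex.abs.pos (hvanish w0 hw0s)
    have hbdd : BddBelow ((fun w => Complex.abs (φ.eval w)) '' sphere (0 : ℂ) k) := by
      refine ⟨0, fun x hx => ?_⟩
      obtain ⟨y, _, rfl⟩ := hx
      exact Complex.abs.nonneg _
    have hmub : ∀ w ∈ sphere (0:ℂ) k, m ≤ Complex.abs (φ.eval w) := by
      intro w hw
      exact csInf_le hbdd ⟨w, hw, rfl⟩
    have hmpos : 0 < m := by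
      have : Complex.abs (φ.eval w0) ≤ m := by
        apply le_csInf (Set.Nonempty.image _ ⟨w0, hw0s⟩)
        rintro x ⟨y, hy, rfl⟩
        exact hw0min hy
      linarith
    have hne : ∀ w : ℂ, Complex.abs w ≤ k → φ.eval w ≠ 0 := by
      intro w hw
      rcases lt_or_eq_of_le hw with h | h
      · exact hnz w h
      · exact hvanish w (by simp [mem_sphere_iff_norm, Complex.norm_eq_abs, h])
    have hdiff : DiffContOnCl ℂ (fun w => (φ.eval w)⁻¹) (ball (0:ℂ) k) := by
      constructor
      · apply DifferentiableOn.inv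
        · exact (φ.differentiable).differentiableOn
        · intro x hx
          exact hnz x (by simpa [Complex.norm_eq_abs] using mem_ball_zero_iff.mp hx)
      · apply ContinuousOn.inv₀
        · exact (φ.continuous).continuousOn
        · intro x hx
          rw [closure_ball _ hk.ne'] at hx
          exact hne x (by simpa [Complex.norm_eq_abs] using mem_closedBall_zero_iff.mp hx)
    have hfr : ∀ w ∈ frontier (ball (0:ℂ) k), ‖(φ.eval w)⁻¹‖ ≤ m⁻¹ := by
      intro w hw
      rw [frontier_ball _ hk.ne'] at hw
      rw [norm_inv, Complex.norm_eq_abs]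
      exact inv_anti₀ hmpos (hmub w hw)
    have hcl : z ∈ closure (ball (0:ℂ) k) := by
      rw [closure_ball _ hk.ne']
      simpa [Complex.norm_eq_abs] using hz
    have hzb := Complex.norm_le_of_forall_mem_frontier_norm_le (isBounded_ball) hdiff hfr hcl
    rw [norm_inv, Complex.norm_eq_abs] at hzb
    have hφz : 0 < Complex.abs (φ.eval z) := Complex.abs.pos (hne z hz)
    exact (inv_le_inv₀ hφz hmpos).mp hzb

lemma qazi (φ : Polynomial ℂ) (N μ : ℕ) (hN : φ.natDegree = N) (hN1 : 1 ≤ N) (hμ1 : 1 ≤ μ)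
    (hμN : μ ≤ N) (k : ℝ) (hk : 1 ≤ k)
    (hgap : ∀ v : ℕ, 1 ≤ v → v < μ → φ.coeff v = 0)
    (hnz : ∀ w : ℂ, Complex.abs w < k → φ.eval w ≠ 0) (z : ℂ) (hz : Complex.abs z = 1) :
    k ^ μ * Complex.abs ((derivative φ).eval z) ≤
      Complex.abs ((N : ℂ) * φ.eval z - z * (derivative φ).eval z) := by
  have hkpos : (0:ℝ) < k := lt_of_lt_of_le zero_lt_one hk
  have hφ0 : φ ≠ 0 := by
    intro h
    exact hnz 0 (by simpa using hkpos) (by simp [h])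
  have hroots : ∀ w ∈ φ.roots, k ≤ Complex.abs w := by
    intro w hw
    by_contra hlt
    exact hnz w (lt_of_not_ge hlt) (isRoot_of_mem_roots hw)
  have ptws : ∀ ζ : ℂ, Complex.abs ζ ≤ k →
      k * Complex.abs ((derivative φ).eval ζ) ≤
        Complex.abs ((N : ℂ) * φ.eval ζ - ζ * (derivative φ).eval ζ) := by
    intro ζ hζ
    by_cases hev : φ.eval ζ = 0
    · have hζk : Complex.abs ζ = k := by
        by_contra hne
        exact hnz ζ (lt_of_le_of_ne hζ hne) hev
      rw [hev]
      rw [show (N:ℂ) * 0 - ζ * (derivative φ).eval ζ = -(ζ * (derivative φ).eval ζ) by ring]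
      rw [Complex.abs.map_neg, map_mul, hζk]
    · exact lemD φ N hN.le hφ0 k hkpos hroots ζ hζ hev
  rcases eq_or_lt_of_le hk with rfl | hk1
  · simpa using ptws z hz.le
  -- now 1 < k
  have hdvd : X ^ (μ - 1) ∣ derivative φ := by
    rw [X_pow_dvd_iff]
    intro d hd
    rw [coeff_derivative]
    have h1 : 1 ≤ d + 1 := Nat.le_add_left 1 d
    have h2 : d + 1 < μ := by omega
    rw [hgap (d+1) h1 h2]
    simp
  obtain ⟨B, hB⟩ := hdvd
  set Dp : Polynomial ℂ := C (N:ℂ) * φ - X * derivative φ with hDp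
  have hDeval : ∀ ζ : ℂ, Dp.eval ζ = (N : ℂ) * φ.eval ζ - ζ * (derivative φ).eval ζ := by
    intro ζ; simp [hDp]
  have hDne : ∀ ζ : ℂ, Complex.abs ζ < k → Dp.eval ζ ≠ 0 := by
    intro ζ hζ h0
    have h1 := ptws ζ hζ.le
    rw [← hDeval, h0] at h1
    simp only [map_zero] at h1
    have h2 : Complex.abs ((derivative φ).eval ζ) = 0 := by
      nlinarith [Complex.abs.nonneg ((derivative φ).eval ζ)]
    have h3 : (derivative φ).eval ζ = 0 := by
      rwa [_root_.map_eq_zero] at h2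
    have h4 : (N:ℂ) * φ.eval ζ = 0 := by
      have := hDeval ζ; rw [h0, h3] at this; linear_combination -this
    have h5 : φ.eval ζ = 0 := by
      have hNne : (N:ℂ) ≠ 0 := Nat.cast_ne_zero.mpr (by omega)
      exact (mul_eq_zero.mp h4).resolve_left hNne
    exact hnz ζ hζ h5
  -- bound for each R in (1,k)
  have hRbound : ∀ R : ℝ, 1 ≤ R → R < k →
      k * R^(μ-1) * Complex.abs (B.eval z) ≤ Complex.abs (Dp.eval z) := by
    intro R hR1 hRk
    have hRpos : (0:ℝ) < R := lt_of_lt_of_le zero_lt_one hR1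
    -- max modulus for eval ∘ B / eval ∘ Dp on ball R
    set F : ℂ → ℂ := fun ζ => B.eval ζ / Dp.eval ζ with hF
    have hdiff : DiffContOnCl ℂ F (ball (0:ℂ) R) := by
      have : DifferentiableOn ℂ F (closedBall (0:ℂ) R) := by
        apply DifferentiableOn.div
        · exact (B.differentiable).differentiableOn
        · exact (Dp.differentiable).differentiableOn
        · intro x hx
          exact hDne x (lt_of_le_of_lt (by simpa [Complex.norm_eq_abs] using mem_closedBall_zero_iff.mp hx) hRk)
      constructor
      · exact this.mono (ball_subset_closedBall)
      · rw [closure_ball _ hRpos.ne']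
        exact this.continuousOn
    have hfr : ∀ w ∈ frontier (ball (0:ℂ) R), ‖F w‖ ≤ 1/(k * R^(μ-1)) := by
      intro w hw
      rw [frontier_ball _ hRpos.ne'] at hw
      have hwR : Complex.abs w = R := by simpa [Complex.norm_eq_abs] using mem_sphere_zero_iff_norm.mp hw
      have hptw := ptws w (by rw [hwR]; exact hRk.le)
      have hBev : (derivative φ).eval w = w^(μ-1) * B.eval w := by rw [hB]; simp
      rw [hBev, map_mul, map_pow, hwR] at hptw
      have hDw : 0 < Complex.abs (Dp.eval w) := Complex.abs.pos (hDne w (by rw [hwR]; exact hRk))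
      rw [Complex.norm_eq_abs, hF, map_div₀, div_le_div_iff₀ hDw (by positivity)]
      calc Complex.abs (B.eval w) * (k * R^(μ-1)) = k * (R^(μ-1) * Complex.abs (B.eval w)) := by ring
        _ ≤ Complex.abs ((N : ℂ) * φ.eval w - w * (w^(μ-1) * B.eval w)) := hptw
        _ = 1 * Complex.abs (Dp.eval w) := by
            rw [hDeval, hB]
            simp only [eval_mul, eval_pow, eval_X, one_mul]
    have hcl : z ∈ closure (ball (0:ℂ) R) := by
      rw [closure_ball _ hRpos.ne']
      simpa [Complex.norm_eq_abs, hz] using hR1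
    have hFb := Complex.norm_le_of_forall_mem_frontier_norm_le (isBounded_ball) hdiff hfr hcl
    rw [Complex.norm_eq_abs, hF, map_div₀] at hFb
    have hDz : 0 < Complex.abs (Dp.eval z) := Complex.abs.pos (hDne z (by rw [hz]; exact hk1))
    rw [div_le_div_iff₀ hDz (by positivity)] at hFb
    calc k * R^(μ-1) * Complex.abs (B.eval z) = Complex.abs (B.eval z) * (k * R^(μ-1)) := by ring
      _ ≤ 1 * Complex.abs (Dp.eval z) := hFb
      _ = Complex.abs (Dp.eval z) := by ring
  -- limit R → k
  have hlim : k * k^(μ-1) * Complex.abs (B.eval z) ≤ Complex.abs (Dp.eval z) := by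
    have htend : Filter.Tendsto (fun R : ℝ => k * R^(μ-1) * Complex.abs (B.eval z))
        (nhdsWithin k (Set.Iio k)) (nhds (k * k^(μ-1) * Complex.abs (B.eval z))) := by
      apply Filter.Tendsto.mono_left _ nhdsWithin_le_nhds
      exact (Continuous.tendsto (by continuity) k)
    apply le_of_tendsto htend
    filter_upwards [Ioo_mem_nhdsLT_of_mem (by constructor <;> [exact hk1; exact le_refl k] :
      k ∈ Set.Ioc (1:ℝ) k)] with R hR
    exact hRbound R hR.1.le hR.2
  have hφ'z : Complex.abs ((derivative φ).eval z) = Complex.abs (B.eval z) := by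
    rw [hB]
    simp only [eval_mul, eval_pow, eval_X, map_mul, map_pow, hz, one_pow, one_mul]
  rw [hφ'z, ← hDeval]
  calc k^μ * Complex.abs (B.eval z) = k * k^(μ-1) * Complex.abs (B.eval z) := by
        rw [← pow_succ']
        congr 2
        omega
    _ ≤ Complex.abs (Dp.eval z) := hlim

lemma F2pp (φ : Polynomial ℂ) (N μ : ℕ) (hN : φ.natDegree = N) (hN1 : 1 ≤ N) (hμ1 : 1 ≤ μ)
    (hμN : μ ≤ N) (k : ℝ) (hk : 1 ≤ k)
    (hgap : ∀ v : ℕ, 1 ≤ v → v < μ → φ.coeff v = 0)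
    (hnz : ∀ w : ℂ, Complex.abs w < k → φ.eval w ≠ 0) (z : ℂ) (hz : Complex.abs z = 1) :
    k ^ μ * Complex.abs ((derivative φ).eval z) +
        N * sInf ((fun w => Complex.abs (φ.eval w)) '' sphere (0 : ℂ) k) ≤
      Complex.abs ((N : ℂ) * φ.eval z - z * (derivative φ).eval z) := by
  have hkpos : (0:ℝ) < k := lt_of_lt_of_le zero_lt_one hk
  set m := sInf ((fun w => Complex.abs (φ.eval w)) '' sphere (0 : ℂ) k) with hm
  set a' := Complex.abs ((derivative φ).eval z) with ha'
  set Dz := (N : ℂ) * φ.eval z - z * (derivative φ).eval z with hDz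
  set Y := Complex.abs Dz with hY
  have hm0 : 0 ≤ m := by
    apply Real.sInf_nonneg
    rintro x ⟨y, _, rfl⟩
    exact Complex.abs.nonneg _
  rcases eq_or_lt_of_le hm0 with hmz | hmpos
  · rw [← hmz]
    simpa using qazi φ N μ hN hN1 hμ1 hμN k hk hgap hnz z hz
  -- m > 0
  have key : ∀ c : ℂ, Complex.abs c < m → k ^ μ * a' ≤ Complex.abs (Dz - N * c) := by
    intro c hc
    set g : Polynomial ℂ := φ - C c with hg
    have hgdeg : g.natDegree = N := by
      rw [hg, natDegree_sub_C, hN]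
    have hggap : ∀ v : ℕ, 1 ≤ v → v < μ → g.coeff v = 0 := by
      intro v h1 h2
      rw [hg, coeff_sub, coeff_C, if_neg (by omega), sub_zero]
      exact hgap v h1 h2
    have hgnz : ∀ w : ℂ, Complex.abs w < k → g.eval w ≠ 0 := by
      intro w hw h0
      rw [hg, eval_sub, eval_C, sub_eq_zero] at h0
      have h1 : m ≤ Complex.abs (φ.eval w) := poly_minmod φ k hkpos hnz w hw.le
      rw [h0] at h1
      linarith
    have hq := qazi g N μ hgdeg hN1 hμ1 hμN k hk hggap hgnz z hz
    have hgd : derivative g = derivative φ := by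
      rw [hg, derivative_sub, derivative_C, sub_zero]
    rw [hgd] at hq
    have hge : (N : ℂ) * g.eval z - z * (derivative φ).eval z = Dz - N * c := by
      rw [hg, eval_sub, eval_C, hDz]; ring
    rw [hge] at hq
    exact hq
  have hNm : (0:ℝ) < N * m := by
    have : (0:ℝ) < N := by exact_mod_cast hN1
    positivity
  by_cases hYm : Y < N * m
  · exfalso
    have hNC : (N:ℂ) ≠ 0 := Nat.cast_ne_zero.mpr (by omega)
    have hNr : (0:ℝ) < (N:ℝ) := by exact_mod_cast hN1
    have hc : Complex.abs (Dz / N) < m := by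
      rw [map_div₀, Complex.abs_natCast]
      rw [div_lt_iff₀ hNr]
      calc Complex.abs Dz = Y := rfl
        _ < N * m := hYm
        _ = m * N := by ring
    have h1 := key (Dz / N) hc
    have h2 : Dz - (N:ℂ) * (Dz / N) = 0 := by field_simp; ring
    rw [h2, map_zero] at h1
    have ha0 : a' = 0 := by
      have hkμ : (0:ℝ) < k ^ μ := by positivity
      nlinarith [Complex.abs.nonneg ((derivative φ).eval z), ha' ▸ Complex.abs.nonneg ((derivative φ).eval z)]
    have hd0 : (derivative φ).eval z = 0 := by
      have := Complex.abs.eq_zero.mp (ha' ▸ ha0 : Complex.abs ((derivative φ).eval z) = 0)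
      exact this
    have hYeq : Y = N * Complex.abs (φ.eval z) := by
      rw [hY, hDz, hd0, mul_zero, sub_zero, map_mul, Complex.abs_natCast]
    have hmz : m ≤ Complex.abs (φ.eval z) := poly_minmod φ k hkpos hnz z (by rw [hz]; exact hk)
    nlinarith
  · push_neg at hYm
    have hYpos : 0 < Y := lt_of_lt_of_le hNm hYm
    -- for each t in [0,1): k^μ a' ≤ Y - t N m
    have hbound : ∀ t : ℝ, 0 ≤ t → t < 1 → k ^ μ * a' ≤ Y - t * (N * m) := by
      intro t ht0 ht1
      have hc : Complex.abs ((t * m / Y : ℝ) * Dz) < m := by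
        rw [map_mul, Complex.abs_ofReal, abs_of_nonneg (by positivity)]
        rw [show t * m / Y * Complex.abs Dz = t * m / Y * Y from rfl]
        rw [div_mul_cancel₀ _ hYpos.ne']
        nlinarith
      have h1 := key _ hc
      have h2 : Dz - (N:ℂ) * ((t * m / Y : ℝ) * Dz) = ((1 - N * (t * m / Y) : ℝ) : ℂ) * Dz := by
        push_cast
        ring
      rw [h2, map_mul, Complex.abs_ofReal] at h1
      have h3 : (0:ℝ) ≤ 1 - (N:ℝ) * (t * m / Y) := by
        rw [sub_nonneg, mul_div_assoc']
        rw [div_le_one hYpos]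
        nlinarith
      rw [abs_of_nonneg h3] at h1
      calc k ^ μ * a' ≤ (1 - (N:ℝ) * (t * m / Y)) * Y := h1
        _ = Y - t * (N * m) := by field_simp
    have htend : Filter.Tendsto (fun t : ℝ => Y - t * (N * m)) (nhdsWithin 1 (Set.Iio 1))
        (nhds (Y - 1 * (N * m))) := by
      apply Filter.Tendsto.mono_left _ nhdsWithin_le_nhds
      exact Continuous.tendsto (by continuity) 1
    have hfinal : k ^ μ * a' ≤ Y - 1 * ((N:ℝ) * m) := by
      apply ge_of_tendsto htend
      filter_upwards [Ico_mem_nhdsLT_of_mem (by constructor <;> [exact zero_lt_one; exact le_refl (1:ℝ)] :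
        (1:ℝ) ∈ Set.Ioc 0 1)] with t ht
      exact hbound t ht.1 ht.2
    linarith

lemma F1pt (p : Polynomial ℂ) (n : ℕ) (hn : p.natDegree ≤ n) (hn1 : 1 ≤ n) (z : ℂ)
    (hz : Complex.abs z = 1) :
    Complex.abs ((derivative p).eval z) +
        Complex.abs ((n : ℂ) * p.eval z - z * (derivative p).eval z) ≤
      n * polyMaxOn p 1 := by
  set M := polyMaxOn p 1 with hM
  have hsub : ∀ w : ℂ, Complex.abs w ≤ 1 → Complex.abs (p.eval w) ≤ M :=
    fun w hw => poly_maxmod p 1 zero_lt_one w hw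
  have hM0 : 0 ≤ M := le_trans (Complex.abs.nonneg _) (hsub 0 (by simp))
  rcases eq_or_lt_of_le hM0 with hMz | hMpos
  · -- M = 0 : p vanishes on closed ball, so p = 0
    have hp0 : p = 0 := by
      apply Polynomial.eq_zero_of_infinite_isRoot
      apply Set.infinite_of_injective_forall_mem
        (f := fun j : ℕ => (((j:ℂ) + 2)⁻¹ : ℂ))
      · intro a b hab
        simp only at hab
        have h1 : ((a:ℂ) + 2) = ((b:ℂ) + 2) := inv_injective hab
        have h2 : (a:ℂ) = (b:ℂ) := by linear_combination h1
        exact_mod_cast h2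
      · intro j
        have habs : Complex.abs (((j:ℂ) + 2)⁻¹) ≤ 1 := by
          rw [map_inv₀, show ((j:ℂ)+2) = (((j+2:ℕ)):ℂ) by push_cast; ring,
            Complex.abs_natCast]
          rw [inv_le_one_iff₀]
          right
          exact_mod_cast (by omega : 1 ≤ j+2)
        have hle := hsub _ habs
        rw [← hMz] at hle
        have h0 : Complex.abs (p.eval (((j:ℂ) + 2)⁻¹)) = 0 :=
          le_antisymm hle (Complex.abs.nonneg _)
        exact Complex.abs.eq_zero.mp h0
    have hnM : (0:ℝ) ≤ (n:ℝ) * M := mul_nonneg (Nat.cast_nonneg n) hM0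
    simp only [hp0, derivative_zero, eval_zero, map_zero, mul_zero, zero_sub, sub_zero,
      add_zero, zero_add, neg_zero, zero_mul]
    simpa using hnM
  -- M > 0
  set a := Complex.abs ((derivative p).eval z) with ha
  set c₀ := (n : ℂ) * p.eval z - z * (derivative p).eval z with hc₀
  set b := Complex.abs c₀ with hb
  set u : ℂ := if c₀ = 0 then 1 else c₀ / b with hu
  have huabs : Complex.abs u = 1 := by
    rw [hu]
    split_ifs with h
    · simp
    · rw [map_div₀, Complex.abs_ofReal, hb, abs_of_pos (Complex.abs.pos h), div_self
        (Complex.abs.ne_zero h)]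
  have core : ∀ t : ℝ, 1 < t → a ≤ Complex.abs (c₀ - (n:ℂ) * ((t * M : ℝ) * u)) := by
    intro t ht
    set lc : ℂ := ((t * M : ℝ) : ℂ) * u with hlc
    have hlcabs : Complex.abs lc = t * M := by
      rw [hlc, map_mul, Complex.abs_ofReal, huabs, mul_one, abs_of_pos (by nlinarith)]
    set P : Polynomial ℂ := p - C lc with hP
    have hPeval : ∀ w : ℂ, P.eval w = p.eval w - lc := by intro w; simp [hP]
    have hPd : derivative P = derivative p := by rw [hP, derivative_sub, derivative_C, sub_zero]
    have hPne : ∀ w : ℂ, Complex.abs w ≤ 1 → P.eval w ≠ 0 := by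
      intro w hw h0
      rw [hPeval, sub_eq_zero] at h0
      have := hsub w hw
      rw [h0, hlcabs] at this
      nlinarith
    have hP0 : P ≠ 0 := fun h => hPne z hz.le (by rw [h]; simp)
    have hPdeg : P.natDegree ≤ n := by
      refine le_trans (natDegree_sub_le _ _) ?_
      simp [hn, natDegree_C]
    have hProots : ∀ w ∈ P.roots, (1:ℝ) ≤ Complex.abs w := by
      intro w hw
      by_contra hlt
      exact hPne w (le_of_not_ge hlt) (isRoot_of_mem_roots hw)
    have hezP : P.eval z ≠ 0 := hPne z hz.le
    have hld := lemD P n hPdeg hP0 1 zero_lt_one hProots z hz.le hezP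
    rw [one_mul, hPd] at hld
    have heq : (n : ℂ) * P.eval z - z * (derivative p).eval z = c₀ - (n:ℂ) * lc := by
      rw [hPeval, hc₀]; ring
    rw [heq] at hld
    exact hld
  have hnR : (1:ℝ) ≤ (n:ℝ) := by exact_mod_cast hn1
  by_cases hc0 : c₀ = 0
  · -- b = 0
    have hb0 : b = 0 := by rw [hb, hc0, map_zero]
    rw [hb0, add_zero]
    have hcore2 : ∀ t : ℝ, 1 < t → a ≤ (n:ℝ) * (t * M) := by
      intro t ht
      have h1 := core t ht
      have h2 : c₀ - (n:ℂ) * (((t * M : ℝ) : ℂ) * u) = -((n:ℂ) * ((t*M : ℝ) : ℂ)) := by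
        rw [hc0, hu, if_pos hc0]; ring
      rw [h2, Complex.abs.map_neg, map_mul, Complex.abs_natCast, Complex.abs_ofReal,
        abs_of_pos (by nlinarith : (0:ℝ) < t * M)] at h1
      exact h1
    have htend : Filter.Tendsto (fun t : ℝ => (n:ℝ) * (t * M)) (nhdsWithin 1 (Set.Ioi 1))
        (nhds ((n:ℝ) * (1 * M))) := by
      apply Filter.Tendsto.mono_left _ nhdsWithin_le_nhds
      exact Continuous.tendsto (by continuity) 1
    have := ge_of_tendsto htend (by
      filter_upwards [Ioo_mem_nhdsGT_of_mem (by constructor <;> [exact le_refl (1:ℝ); exact one_lt_two] :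
        (1:ℝ) ∈ Set.Ico 1 2)] with t ht
      exact hcore2 t ht.1)
    linarith [this]
  · have hbpos : 0 < b := Complex.abs.pos hc0
    have habs_expr : ∀ t : ℝ, 0 < t →
        Complex.abs (c₀ - (n:ℂ) * (((t * M : ℝ) : ℂ) * u)) = |b - (n:ℝ)*(t*M)| := by
      intro t ht
      have h1 : c₀ - (n:ℂ) * (((t * M : ℝ) : ℂ) * u) = (((1:ℝ) - (n:ℝ)*(t*M)/b : ℝ) : ℂ) * c₀ := by
        rw [hu, if_neg hc0]
        have hbC : (b:ℂ) ≠ 0 := by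
          exact_mod_cast hbpos.ne'
        push_cast
        field_simp
      rw [h1, map_mul, Complex.abs_ofReal, ← hb]
      have h2 : |1 - (n:ℝ)*(t*M)/b| = |b - (n:ℝ)*(t*M)| / b := by
        rw [show 1 - (n:ℝ)*(t*M)/b = (b - (n:ℝ)*(t*M))/b by field_simp, abs_div,
          abs_of_pos hbpos]
      rw [h2, div_mul_cancel₀ _ hbpos.ne']
    by_cases hble : b ≤ (n:ℝ) * M
    · have hcore2 : ∀ t : ℝ, 1 < t → a ≤ (n:ℝ)*(t*M) - b := by
        intro t ht
        have h1 := core t ht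
        rw [habs_expr t (by linarith)] at h1
        have h3 : b ≤ (n:ℝ)*(t*M) := by nlinarith
        rw [abs_of_nonpos (by linarith), neg_sub] at h1
        exact h1
      have htend : Filter.Tendsto (fun t : ℝ => (n:ℝ) * (t * M) - b) (nhdsWithin 1 (Set.Ioi 1))
          (nhds ((n:ℝ) * (1 * M) - b)) := by
        apply Filter.Tendsto.mono_left _ nhdsWithin_le_nhds
        exact Continuous.tendsto (by continuity) 1
      have := ge_of_tendsto htend (by
        filter_upwards [Ioo_mem_nhdsGT_of_mem (by constructor <;> [exact le_refl (1:ℝ); exact one_lt_two] :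
          (1:ℝ) ∈ Set.Ico 1 2)] with t ht
        exact hcore2 t ht.1)
      linarith [this]
    · exfalso
      push_neg at hble
      have hnMpos : (0:ℝ) < (n:ℝ) * M := by nlinarith
      set t0 : ℝ := b / ((n:ℝ) * M) with ht0
      have ht01 : 1 < t0 := by
        rw [ht0, lt_div_iff₀ hnMpos]
        linarith
      have h1 := core t0 ht01
      rw [habs_expr t0 (by linarith)] at h1
      have h2 : b - (n:ℝ)*(t0*M) = 0 := by
        rw [ht0]
        field_simp
        ring
      rw [h2, abs_zero] at h1
      have ha0 : a = 0 := le_antisymm h1 (Complex.abs.nonneg _)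
      have hd0 : (derivative p).eval z = 0 := Complex.abs.eq_zero.mp ha0
      have hc₀eq : c₀ = (n:ℂ) * p.eval z := by rw [hc₀, hd0]; ring
      have hbeq : b = (n:ℝ) * Complex.abs (p.eval z) := by
        rw [hb, hc₀eq, map_mul, Complex.abs_natCast]
      have hpzM := hsub z hz.le
      have h3 : b ≤ (n:ℝ)*M := by
        rw [hbeq]
        exact mul_le_mul_of_nonneg_left hpzM (Nat.cast_nonneg n)
      linarith

lemma hgen_identity : ∀ A1 km ks Mv mv nv sv : ℝ, 0 < 1 + km → 0 < ks →
    nv * Mv + (A1 - 1) * ((nv * Mv + sv * km * Mv - (nv - sv) * (mv / ks)) / (1 + km)) =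
      (A1 * (nv + sv * km) + (nv - sv) * km) / (1 + km) * Mv -
        (A1 - 1) * (nv - sv) / (ks * (1 + km)) * mv := by
  intro A1 km ks Mv mv nv sv h1 h2
  field_simp
  ring

set_option maxHeartbeats 1000000 in
theorem polar_upper_corollary5 (n s μ : ℕ) (k : ℝ) (hk : 1 ≤ k)
    (α : ℂ) (hα : 1 ≤ ‖α‖)
    (hμ1 : 1 ≤ μ) (hμ : μ ≤ n - s) (hs : s ≤ n - 1)
    (φ p : Polynomial ℂ) (hφdeg : φ.natDegree = n - s)
    (hcoeff : ∀ v : ℕ, 1 ≤ v → v < μ → φ.coeff v = 0)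
    (hφz : ∀ z : ℂ, φ.eval z = 0 → k ≤ ‖z‖)
    (hp : p = X ^ s * φ) (hpdeg : p.natDegree = n) :
    sSup ((fun z =>
        ‖(n : ℂ) * p.eval z + (α - z) * (derivative p).eval z‖) ''
          sphere (0 : ℂ) 1) ≤
      (‖α‖ * ((n : ℝ) + s * k ^ μ) + ((n : ℝ) - s) * k ^ μ) / (1 + k ^ μ) *
          polyMaxOn p 1 -
        (‖α‖ - 1) * ((n : ℝ) - s) / (k ^ s * (1 + k ^ μ)) * polyMinOn p k := by
  simp only [Complex.norm_eq_abs] at hα hφz ⊢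
  have hkpos : (0:ℝ) < k := lt_of_lt_of_le zero_lt_one hk
  set N := n - s with hN
  have hN1 : 1 ≤ N := le_trans hμ1 hμ
  have hsn : s < n := by omega
  have hn1 : 1 ≤ n := by omega
  have hnz : ∀ w : ℂ, Complex.abs w < k → φ.eval w ≠ 0 := by
    intro w hw h0
    exact absurd (hφz w h0) (not_le.mpr hw)
  set M := polyMaxOn p 1 with hM
  set m := polyMinOn p k with hm
  set mφ := sInf ((fun w => Complex.abs (φ.eval w)) '' sphere (0 : ℂ) k) with hmφ
  have hKpos : (0:ℝ) < k^s := by positivity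
  have hTpos : (0:ℝ) < 1 + k^μ := by positivity
  -- m / k^s ≤ mφ
  have hmle : m / k^s ≤ mφ := by
    have himg : ∀ w : ℂ, w ∈ sphere (0:ℂ) k →
        Complex.abs (p.eval w) = k^s * Complex.abs (φ.eval w) := by
      intro w hw
      have hwk : Complex.abs w = k := by simpa [Complex.norm_eq_abs] using mem_sphere_zero_iff_norm.mp hw
      rw [hp]
      simp only [eval_mul, eval_pow, eval_X, map_mul, map_pow, hwk]
    apply le_csInf (Set.Nonempty.image _ (NormedSpace.sphere_nonempty.mpr hkpos.le))
    rintro x ⟨w, hw, rfl⟩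
    rw [div_le_iff₀ hKpos]
    have h1 : m ≤ Complex.abs (p.eval w) := by
      apply csInf_le ⟨0, fun x hx => by obtain ⟨y, _, rfl⟩ := hx; exact Complex.abs.nonneg _⟩
      exact ⟨w, hw, rfl⟩
    rw [himg w hw] at h1
    linarith
  have hm0 : 0 ≤ m := by
    apply Real.sInf_nonneg
    rintro x ⟨y, _, rfl⟩
    exact Complex.abs.nonneg _
  have hM0 : 0 ≤ M := le_trans (Complex.abs.nonneg (p.eval 1)) (poly_maxmod p 1 zero_lt_one 1 (by simp))
  -- pointwise bound
  have hpt : ∀ z : ℂ, Complex.abs z = 1 →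
      Complex.abs ((n : ℂ) * p.eval z + (α - z) * (derivative p).eval z) ≤
        (Complex.abs α * ((n : ℝ) + s * k ^ μ) + ((n : ℝ) - s) * k ^ μ) / (1 + k ^ μ) * M -
          (Complex.abs α - 1) * ((n : ℝ) - s) / (k ^ s * (1 + k ^ μ)) * m := by
    intro z hz
    set a := Complex.abs ((derivative p).eval z) with ha
    set bb := Complex.abs ((n : ℂ) * p.eval z - z * (derivative p).eval z) with hbb
    have hF1 : a + bb ≤ n * M := F1pt p n hpdeg.le hn1 z hz
    -- eval relations
    have hps : p.eval z = z^s * φ.eval z := by rw [hp]; simp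
    have hpd : derivative p = C (s:ℂ) * X^(s-1) * φ + X^s * derivative φ := by
      rw [hp, derivative_mul, derivative_X_pow]
    have hdz : (derivative p).eval z = (s:ℂ) * z^(s-1) * φ.eval z + z^s * (derivative φ).eval z := by
      rw [hpd]; simp
    have hcast : (n:ℂ) = (N:ℂ) + (s:ℂ) := by
      rw [hN]; push_cast [Nat.cast_sub hsn.le]; ring
    have hid : (n:ℂ) * p.eval z - z * (derivative p).eval z =
        z^s * ((N:ℂ) * φ.eval z - z * (derivative φ).eval z) := by
      rcases Nat.eq_zero_or_pos s with hs0 | hs1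
      · subst hs0
        rw [hps, hdz]
        simp only [Nat.cast_zero, pow_zero, one_mul, zero_mul, zero_add, Nat.zero_sub]
        first
        | rfl
        | (rw [show ((N:ℂ)) = (n:ℂ) by rw [hcast]; simp]; ring)
      · have hzz : z * z^(s-1) = z^s := by
          rw [← pow_succ']
          congr 1
          omega
        rw [hps, hdz]
        linear_combination (z^s * φ.eval z) * hcast - ((s:ℂ) * φ.eval z) * hzz
    have hbbeq : bb = Complex.abs ((N:ℂ) * φ.eval z - z * (derivative φ).eval z) := by
      rw [hbb, hid, map_mul, map_pow, hz, one_pow, one_mul]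
    have hφzM : Complex.abs (φ.eval z) ≤ M := by
      have h1 : Complex.abs (p.eval z) = Complex.abs (φ.eval z) := by
        rw [hps, map_mul, map_pow, hz, one_pow, one_mul]
      rw [← h1]
      exact poly_maxmod p 1 zero_lt_one z hz.le
    have haφ : a ≤ s * M + Complex.abs ((derivative φ).eval z) := by
      rw [ha, hdz]
      calc Complex.abs ((s:ℂ) * z^(s-1) * φ.eval z + z^s * (derivative φ).eval z) ≤
            Complex.abs ((s:ℂ) * z^(s-1) * φ.eval z) + Complex.abs (z^s * (derivative φ).eval z) :=
          Complex.abs.add_le _ _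
        _ = s * Complex.abs (φ.eval z) + Complex.abs ((derivative φ).eval z) := by
            simp [map_mul, map_pow, hz, Complex.abs_natCast]
        _ ≤ s * M + Complex.abs ((derivative φ).eval z) := by
            have : (0:ℝ) ≤ (s:ℝ) := Nat.cast_nonneg s
            nlinarith
    have hF2' := F2pp φ N μ hφdeg hN1 hμ1 hμ k hk hcoeff hnz z hz
    rw [← hbbeq, ← hmφ] at hF2'
    -- k^μ * a ≤ bb + s * k^μ * M - N * (m/k^s)
    have hkμpos : (0:ℝ) < k^μ := by positivity
    have hF2 : k^μ * a ≤ bb + s * k^μ * M - N * (m / k^s) := by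
      have h1 : k^μ * a ≤ k^μ * (s * M + Complex.abs ((derivative φ).eval z)) :=
        mul_le_mul_of_nonneg_left haφ hkμpos.le
      have h2 : (N:ℝ) * (m / k^s) ≤ N * mφ := by
        apply mul_le_mul_of_nonneg_left hmle (Nat.cast_nonneg N)
      nlinarith [hF2']
    -- triangle
    have htri : Complex.abs ((n : ℂ) * p.eval z + (α - z) * (derivative p).eval z) ≤
        Complex.abs α * a + bb := by
      have hone : (n : ℂ) * p.eval z + (α - z) * (derivative p).eval z =
          α * (derivative p).eval z + ((n : ℂ) * p.eval z - z * (derivative p).eval z) := by ring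
      rw [hone]
      calc Complex.abs (α * (derivative p).eval z + ((n : ℂ) * p.eval z - z * (derivative p).eval z))
          ≤ Complex.abs (α * (derivative p).eval z) + bb := Complex.abs.add_le _ _
        _ = Complex.abs α * a + bb := by rw [map_mul]
    -- linear arithmetic
    have ha0 : 0 ≤ a := Complex.abs.nonneg _
    have haux : a ≤ (n * M + s * k^μ * M - N * (m / k^s)) / (1 + k^μ) := by
      rw [le_div_iff₀ hTpos]
      nlinarith [hF1, hF2, Complex.abs.nonneg ((n : ℂ) * p.eval z - z * (derivative p).eval z)]
    have hαa : Complex.abs α * a + bb ≤ n * M + (Complex.abs α - 1) * ((n * M + s * k^μ * M - N * (m / k^s)) / (1 + k^μ)) := by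
      have h1 : Complex.abs α * a + bb = (a + bb) + (Complex.abs α - 1) * a := by ring
      rw [h1]
      have h2 : (Complex.abs α - 1) * a ≤ (Complex.abs α - 1) * ((n * M + s * k^μ * M - N * (m / k^s)) / (1 + k^μ)) :=
        mul_le_mul_of_nonneg_left haux (by linarith)
      linarith
    have hNcast : (N:ℝ) = (n:ℝ) - s := by
      rw [hN]; push_cast [Nat.cast_sub hsn.le]; ring
    have hfin : n * M + (Complex.abs α - 1) * ((n * M + s * k^μ * M - N * (m / k^s)) / (1 + k^μ)) =
        (Complex.abs α * ((n : ℝ) + s * k ^ μ) + ((n : ℝ) - s) * k ^ μ) / (1 + k ^ μ) * M -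
          (Complex.abs α - 1) * ((n : ℝ) - s) / (k ^ s * (1 + k ^ μ)) * m := by
      rw [hNcast]
      exact hgen_identity (Complex.abs α) (k^μ) (k^s) M m (n:ℝ) (s:ℝ) hTpos hKpos
    linarith [htri, hαa]
  -- conclude via csSup_le
  apply Real.sSup_le
  · rintro x ⟨z, hzs, rfl⟩
    have hz1 : Complex.abs z = 1 := by simpa [Complex.norm_eq_abs] using mem_sphere_zero_iff_norm.mp hzs
    exact hpt z hz1
  · -- RHS nonneg : use value at z = 1
    have h1 := hpt 1 (by simp)
    have h0 : (0:ℝ) ≤ Complex.abs ((n : ℂ) * p.eval 1 + (α - 1) * (derivative p).eval 1) :=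
      Complex.abs.nonneg _
    linarith
end

section
/- For the polynomial p(z) = z^s (z + k)^{n−s} with positive integers s < n, real k ≥ 1, and real α ≥ 1, the maximum of the polar derivative satisfies max_{|z|=1} |D_α p(z)| = ((n−s)k + αn + αsk)(1+k)^{n−s−1}. -/
open Metric

theorem sharpness_theorem3 (n s : ℕ) (hs : 0 < s) (hsn : s < n)
    (k α : ℝ) (hk : 1 ≤ k) (hα : 1 ≤ α)
    (p : ℂ → ℂ) (hp : p = fun z => z ^ s * (z + (k : ℂ)) ^ (n - s)) :
    sSup ((fun z =>
        ‖(n : ℂ) * p z + ((α : ℂ) - z) * deriv p z‖) '' sphere (0 : ℂ) 1) =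
      ((n - s : ℝ) * k + α * n + α * s * k) * (1 + k) ^ (n - s - 1) := by
  subst hp
  set m := n - s with hm
  have hn : n = s + m := by omega
  have hm1 : 1 ≤ m := by omega
  set A : ℝ := (n - s : ℝ) * k + α * n with hA
  set B : ℝ := α * s * k with hB
  have hk0 : (0:ℝ) ≤ k := by linarith
  have hA0 : 0 ≤ A := by
    have : (0:ℝ) ≤ (n:ℝ) - s := by
      have : (s:ℝ) ≤ n := by exact_mod_cast hsn.le
      linarith
    have hn0 : (0:ℝ) ≤ (n:ℝ) := by positivity
    nlinarith
  have hB0 : 0 ≤ B := by positivity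
  have hderiv : ∀ z : ℂ, deriv (fun z => z ^ s * (z + (k:ℂ)) ^ m) z
      = s * z^(s-1) * (z+(k:ℂ))^m + z^s * (m * (z+(k:ℂ))^(m-1)) := by
    intro z
    have h1 : HasDerivAt (fun z : ℂ => z ^ s) ((s:ℂ) * z^(s-1)) z := by
      simpa using hasDerivAt_pow s z
    have h2 : HasDerivAt (fun z : ℂ => (z + (k:ℂ)) ^ m) ((m:ℂ) * (z+(k:ℂ))^(m-1)) z := by
      have := ((hasDerivAt_id z).add_const (k:ℂ)).pow m
      simp only [id, mul_one] at this
      exact this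
    have := h1.mul h2
    exact this.deriv
  have key : ∀ z : ℂ, (n : ℂ) * (z^s * (z+(k:ℂ))^m) +
      ((α:ℂ) - z) * ((s:ℂ) * z^(s-1) * (z+(k:ℂ))^m + z^s * ((m:ℂ)*(z+(k:ℂ))^(m-1)))
      = z^(s-1) * (z+(k:ℂ))^(m-1) * ((A:ℂ) * z + (B:ℂ)) := by
    intro z
    have es : z ^ s = z ^ (s-1) * z := by
      rw [← pow_succ]; congr 1; omega
    have em : (z+(k:ℂ))^m = (z+(k:ℂ))^(m-1) * (z+(k:ℂ)) := by
      rw [← pow_succ]; congr 1; omega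
    have hnr : (n:ℝ) = s + m := by exact_mod_cast hn
    have hnc : (n:ℂ) = (s:ℂ) + (m:ℂ) := by exact_mod_cast hn
    have hAc : ((A:ℝ):ℂ) = (m:ℂ) * k + α * ((s:ℂ) + m) := by
      rw [hA, hnr]; push_cast; ring
    have hBc : ((B:ℝ):ℂ) = (α:ℂ) * s * k := by rw [hB]; push_cast; ring
    rw [hnc, hAc, hBc, es, em]
    ring
  have habs : ∀ z ∈ sphere (0:ℂ) 1,
      ‖(n : ℂ) * (z^s * (z+(k:ℂ))^m) + ((α:ℂ) - z) *
        deriv (fun z => z ^ s * (z + (k:ℂ)) ^ m) z‖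
      = ‖z+(k:ℂ)‖^(m-1) * ‖(A:ℂ) * z + (B:ℂ)‖ := by
    intro z hz
    have hz1 : ‖z‖ = 1 := by
      simpa using mem_sphere_zero_iff_norm.mp hz
    rw [hderiv z, key z, norm_mul, norm_mul, norm_pow, norm_pow, hz1, one_pow, one_mul]
  apply IsGreatest.csSup_eq
  constructor
  · refine ⟨1, by simp, ?_⟩
    simp only
    rw [habs 1 (by simp)]
    have e1 : ((1:ℂ) + (k:ℂ)) = ((1+k : ℝ) : ℂ) := by push_cast; ring
    have e2 : ((A:ℂ) * 1 + (B:ℂ)) = ((A+B : ℝ) : ℂ) := by push_cast; ring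
    rw [e1, e2, Complex.norm_real, Real.norm_eq_abs, Complex.norm_real, Real.norm_eq_abs,
      abs_of_nonneg (by linarith : (0:ℝ) ≤ 1+k), abs_of_nonneg (by linarith : (0:ℝ) ≤ A+B)]
    rw [hA, hB]; ring
  · rintro x ⟨z, hz, rfl⟩
    simp only
    rw [habs z hz]
    have hz1 : ‖z‖ = 1 := by
      simpa using mem_sphere_zero_iff_norm.mp hz
    have h1 : ‖z+(k:ℂ)‖ ≤ 1 + k := by
      calc ‖z+(k:ℂ)‖ ≤ ‖z‖ + ‖(k:ℂ)‖ := norm_add_le _ _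
        _ = 1 + k := by rw [hz1, Complex.norm_real, Real.norm_eq_abs, abs_of_nonneg hk0]
    have h2 : ‖(A:ℂ) * z + (B:ℂ)‖ ≤ A + B := by
      calc ‖(A:ℂ) * z + (B:ℂ)‖
          ≤ ‖(A:ℂ) * z‖ + ‖(B:ℂ)‖ := norm_add_le _ _
        _ = A + B := by
            rw [norm_mul, hz1, Complex.norm_real, Real.norm_eq_abs, Complex.norm_real, Real.norm_eq_abs,
              abs_of_nonneg hA0, abs_of_nonneg hB0]; ring
    calc ‖z+(k:ℂ)‖^(m-1) * ‖(A:ℂ) * z + (B:ℂ)‖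
        ≤ (1+k)^(m-1) * (A+B) := by
          apply mul_le_mul (pow_le_pow_left₀ (by positivity) h1 _) h2 (by positivity) (by positivity)
      _ = ((n - s : ℝ) * k + α * n + α * s * k) * (1 + k) ^ (m - 1) := by
          rw [hA, hB]; ring
end
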